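/- (Definite-direction exactness.) Suppose H₁,…,H_m ∈ S^n are all positive semidefinite, or all negative semidefinite. Then G(δ) = H₀ + Σ δ_i H_i ⪰ 0 for all δ ∈ [-1,1]^m if and only if there exist a degree-≤2 SOS polynomial matrix S₀ and positive semidefinite S₁,…,S_m ∈ S^n with G(δ) = S₀(δ) + Σ (1-δ_i²)S_i identically. In particular one may take S_i = (1/2)Q_i with Q_i = ±H_i ⪰ 0 and S₀(δ) = G(δ) - (1/2)Σ(1-δ_i²)Q_i. -/

import Mathlib

open Matrix MvPolynomial

/-- A symmetric polynomial matrix `S` is a sum of squares if `S = T * Tᵀ`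
for some polynomial matrix `T`. -/
def IsSOSMatrix {n m : ℕ} (S : Matrix (Fin n) (Fin n) (MvPolynomial (Fin m) ℝ)) : Prop :=
  ∃ (q : ℕ) (T : Matrix (Fin n) (Fin q) (MvPolynomial (Fin m) ℝ)), S = T * Tᵀ

lemma psd_smul {n : ℕ} {A : Matrix (Fin n) (Fin n) ℝ} (hA : A.PosSemidef) {c : ℝ}
    (hc : 0 ≤ c) : (c • A).PosSemidef := by
  constructor
  · rw [Matrix.IsHermitian, conjTranspose_smul, hA.1]
    simp
  · intro x
    exact (hA.smul hc).2 x

open scoped MatrixOrder in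
lemma psd_sqrt_exists {n : ℕ} {A : Matrix (Fin n) (Fin n) ℝ} (hA : A.PosSemidef) :
    ∃ B : Matrix (Fin n) (Fin n) ℝ, B.IsHermitian ∧ B * B = A := by
  classical
  obtain ⟨X, hX, -, h⟩ := CFC.exists_sqrt_of_isSelfAdjoint_of_quasispectrumRestricts
    hA.isHermitian (QuasispectrumRestricts.nnreal_of_nonneg (nonneg_iff_posSemidef.mpr hA))
  exact ⟨X, hX, by simpa using h⟩

noncomputable def Matrix.PosSemidef.sqrt {n : ℕ} {A : Matrix (Fin n) (Fin n) ℝ}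
    (hA : A.PosSemidef) : Matrix (Fin n) (Fin n) ℝ :=
  Classical.choose (psd_sqrt_exists hA)

lemma Matrix.PosSemidef.posSemidef_sqrt {n : ℕ} {A : Matrix (Fin n) (Fin n) ℝ}
    (hA : A.PosSemidef) : hA.sqrt.IsHermitian ∧ hA.sqrt * hA.sqrt = A :=
  Classical.choose_spec (psd_sqrt_exists hA)

lemma Matrix.PosSemidef.sqrt_isHermitian {n : ℕ} {A : Matrix (Fin n) (Fin n) ℝ}
    (hA : A.PosSemidef) : hA.sqrt.IsHermitian :=
  (Classical.choose_spec (psd_sqrt_exists hA)).1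

lemma Matrix.PosSemidef.sqrt_mul_self {n : ℕ} {A : Matrix (Fin n) (Fin n) ℝ}
    (hA : A.PosSemidef) : hA.sqrt * hA.sqrt = A :=
  (Classical.choose_spec (psd_sqrt_exists hA)).2

lemma psd_sum {n : ℕ} {ι : Type*} (s : Finset ι) (f : ι → Matrix (Fin n) (Fin n) ℝ)
    (hf : ∀ i ∈ s, (f i).PosSemidef) : (∑ i ∈ s, f i).PosSemidef := by
  induction s using Finset.cons_induction with
  | empty => simpa using Matrix.PosSemidef.zero
  | cons a s has ih =>
    rw [Finset.sum_cons]
    exact (hf a (Finset.mem_cons_self a s)).add (ih fun i hi => hf i (Finset.mem_cons_of_mem hi))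

lemma IsSOSMatrix.add {n m : ℕ} {A B : Matrix (Fin n) (Fin n) (MvPolynomial (Fin m) ℝ)}
    (hA : IsSOSMatrix A) (hB : IsSOSMatrix B) : IsSOSMatrix (A + B) := by
  obtain ⟨p, T, rfl⟩ := hA
  obtain ⟨q, U, rfl⟩ := hB
  refine ⟨p + q, Matrix.of (fun a j => Fin.addCases (T a) (U a) j), ?_⟩
  ext a b
  simp [Matrix.mul_apply, Matrix.add_apply, Fin.sum_univ_add]

lemma IsSOSMatrix.sum {n m : ℕ} {ι : Type*} (s : Finset ι)
    (f : ι → Matrix (Fin n) (Fin n) (MvPolynomial (Fin m) ℝ))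
    (hf : ∀ i ∈ s, IsSOSMatrix (f i)) : IsSOSMatrix (∑ i ∈ s, f i) := by
  induction s using Finset.cons_induction with
  | empty => exact ⟨0, 0, by ext a b; simp [Matrix.mul_apply]⟩
  | cons a s has ih =>
    rw [Finset.sum_cons]
    exact (hf a (Finset.mem_cons_self a s)).add (ih fun i hi => hf i (Finset.mem_cons_of_mem hi))

lemma map_smul_C {n m : ℕ} (r : ℝ) (A : Matrix (Fin n) (Fin n) ℝ) :
    (r • A).map (C : ℝ → MvPolynomial (Fin m) ℝ) =
      (C r : MvPolynomial (Fin m) ℝ) • A.map C := by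
  ext a b
  simp [Matrix.map_apply, smul_eq_mul, _root_.map_mul]

lemma sq_smul_key {n m : ℕ} (p : MvPolynomial (Fin m) ℝ) (B : Matrix (Fin n) (Fin n) ℝ)
    (hB : Bᵀ = B) :
    (p • B.map (C : ℝ → MvPolynomial (Fin m) ℝ)) * (p • B.map C)ᵀ =
      (p * p) • ((B * B).map C) := by
  rw [Matrix.transpose_smul, ← Matrix.transpose_map, hB,
    smul_mul_assoc, mul_smul_comm, smul_smul]
  congr 1
  exact (Matrix.map_mul (f := (C : ℝ →+* MvPolynomial (Fin m) ℝ))).symm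

lemma forward_aux {n m : ℕ} (H₀ : Matrix (Fin n) (Fin n) ℝ) (H : Fin m → Matrix (Fin n) (Fin n) ℝ)
    (ε : ℝ) (hε : ε * ε = 1)
    (hQ : ∀ i, (ε • H i).PosSemidef)
    (hG : (H₀ - ∑ i : Fin m, ε • H i).PosSemidef) :
    ∃ (S₀ : Matrix (Fin n) (Fin n) (MvPolynomial (Fin m) ℝ))
        (S : Fin m → Matrix (Fin n) (Fin n) ℝ),
        IsSOSMatrix S₀ ∧ (∀ a b, (S₀ a b).totalDegree ≤ 2) ∧
        (∀ i, (S i).PosSemidef) ∧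
        H₀.map MvPolynomial.C +
            ∑ i : Fin m, (MvPolynomial.X i : MvPolynomial (Fin m) ℝ) • (H i).map MvPolynomial.C =
          S₀ + ∑ i : Fin m,
            ((1 : MvPolynomial (Fin m) ℝ) - MvPolynomial.X i ^ 2) • (S i).map MvPolynomial.C := by
  classical
  set c : ℝ := 2⁻¹ * ε with hc
  have hQ' : ∀ i, ((2⁻¹ : ℝ) • (ε • H i)).PosSemidef := fun i => psd_smul (hQ i) (by norm_num)
  set B₀ : Matrix (Fin n) (Fin n) ℝ := hG.sqrt with hB₀
  have hB₀sym : B₀ᵀ = B₀ := by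
    rw [← conjTranspose_eq_transpose_of_trivial]
    exact hG.posSemidef_sqrt.1
  have hBsym : ∀ i, ((hQ' i).sqrt)ᵀ = (hQ' i).sqrt := fun i => by
    rw [← conjTranspose_eq_transpose_of_trivial]
    exact (hQ' i).posSemidef_sqrt.1
  set p : Fin m → MvPolynomial (Fin m) ℝ := fun i => 1 + C ε * X i with hp
  have hC2 : (2 : MvPolynomial (Fin m) ℝ) = C 2 := (map_ofNat (C : ℝ →+* MvPolynomial (Fin m) ℝ) 2).symm
  -- simplified form of S₀
  have h1 : (B₀.map (C : ℝ → MvPolynomial (Fin m) ℝ)) * (B₀.map C)ᵀ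
      = (H₀ - ∑ i : Fin m, ε • H i).map C := by
    have := sq_smul_key (1 : MvPolynomial (Fin m) ℝ) B₀ hB₀sym
    simp only [one_smul, mul_one] at this
    rw [this, hB₀, hG.sqrt_mul_self]
  have h2 : ∀ i : Fin m, (p i • ((hQ' i).sqrt).map (C : ℝ → MvPolynomial (Fin m) ℝ)) *
        (p i • ((hQ' i).sqrt).map C)ᵀ = ((p i * p i) * C c) • (H i).map C := by
    intro i
    rw [sq_smul_key _ _ (hBsym i), (hQ' i).sqrt_mul_self, smul_smul, ← hc, map_smul_C, smul_smul]
  have h3 : (H₀ - ∑ i : Fin m, ε • H i).map (C : ℝ → MvPolynomial (Fin m) ℝ)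
      = H₀.map C - ∑ i : Fin m, (C ε : MvPolynomial (Fin m) ℝ) • (H i).map C := by
    ext a b
    simp [Matrix.map_apply, Matrix.sub_apply, Matrix.sum_apply, Matrix.smul_apply,
      smul_eq_mul, map_sub, map_sum, _root_.map_mul]
  have hS₀ : (B₀.map (C : ℝ → MvPolynomial (Fin m) ℝ)) * (B₀.map C)ᵀ +
        ∑ i : Fin m, ((p i • ((hQ' i).sqrt).map C) * (p i • ((hQ' i).sqrt).map C)ᵀ)
      = (H₀.map C - ∑ i : Fin m, (C ε : MvPolynomial (Fin m) ℝ) • (H i).map C)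
        + ∑ i : Fin m, ((p i * p i) * C c) • (H i).map C := by
    rw [h1, h3]
    exact congrArg _ (Finset.sum_congr rfl fun i _ => h2 i)
  -- scalar identity
  have hscal : ∀ i : Fin m, (p i * p i) * C c + ((1 : MvPolynomial (Fin m) ℝ) - X i ^ 2) * C c
      = (C ε : MvPolynomial (Fin m) ℝ) + X i := by
    intro i
    have hC1 : (C ε : MvPolynomial (Fin m) ℝ) * C ε = 1 := by
      rw [← C_mul, hε, C_1]
    have e1 : (p i * p i) * C c + ((1 : MvPolynomial (Fin m) ℝ) - X i ^ 2) * C c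
        = (C ε * C ε) * (X i ^ 2 * C c) - X i ^ 2 * C c + (2 * C c + (2 * C ε * C c) * X i) := by
      rw [hp]; ring
    have e2 : (2 : MvPolynomial (Fin m) ℝ) * C c = C ε := by
      rw [hC2, ← C_mul]
      congr 1
      rw [hc]; ring
    have e3 : 2 * (C ε : MvPolynomial (Fin m) ℝ) * C c = 1 := by
      rw [hC2, ← C_mul, ← C_mul]
      have : (2 : ℝ) * ε * c = 1 := by rw [hc]; nlinarith [hε]
      rw [this, C_1]
    rw [e1, hC1, one_mul, e2, e3, one_mul]
    ring
  refine ⟨(B₀.map C) * (B₀.map C)ᵀ +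
      ∑ i : Fin m, ((p i • ((hQ' i).sqrt).map C) * (p i • ((hQ' i).sqrt).map C)ᵀ),
    fun i => c • H i, ?_, ?_, ?_, ?_⟩
  · exact IsSOSMatrix.add ⟨n, _, rfl⟩
      (IsSOSMatrix.sum _ _ fun i _ => ⟨n, _, rfl⟩)
  · intro a b
    rw [hS₀]
    simp only [Matrix.add_apply, Matrix.sub_apply, Matrix.sum_apply, Matrix.smul_apply,
      Matrix.map_apply, smul_eq_mul]
    have hdegp : ∀ i : Fin m, (p i).totalDegree ≤ 1 := by
      intro i
      rw [hp]
      refine le_trans (totalDegree_add _ _) (max_le (by simp) ?_)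
      exact le_trans (totalDegree_mul _ _) (by simp [totalDegree_C, totalDegree_X])
    refine le_trans (totalDegree_add _ _) (max_le ?_ ?_)
    · refine le_trans (totalDegree_sub _ _) (max_le (by simp [totalDegree_C]) ?_)
      refine le_trans (totalDegree_finset_sum _ _) (Finset.sup_le fun i _ => ?_)
      refine le_trans (totalDegree_mul _ _) ?_
      simp [totalDegree_C]
    · refine le_trans (totalDegree_finset_sum _ _) (Finset.sup_le fun i _ => ?_)
      refine le_trans (totalDegree_mul _ _) ?_
      have : ((p i * p i) * C c).totalDegree ≤ 2 := by
        refine le_trans (totalDegree_mul _ _) ?_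
        have := le_trans (totalDegree_mul (p i) (p i)) (add_le_add (hdegp i) (hdegp i))
        simpa [totalDegree_C] using this
      simpa [totalDegree_C] using this
  · intro i
    show ((2⁻¹ * ε) • H i).PosSemidef
    rw [← smul_smul]
    exact psd_smul (hQ i) (by norm_num)
  · rw [hS₀]
    have hSmap : ∀ i : Fin m, ((1 : MvPolynomial (Fin m) ℝ) - X i ^ 2) • ((c • H i).map (C : ℝ → MvPolynomial (Fin m) ℝ))
        = (((1 : MvPolynomial (Fin m) ℝ) - X i ^ 2) * C c) • (H i).map C := by
      intro i; rw [map_smul_C, smul_smul]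
    simp only [hSmap]
    rw [add_assoc, ← Finset.sum_add_distrib]
    have : ∑ i : Fin m, (((p i * p i) * C c) • (H i).map (C : ℝ → MvPolynomial (Fin m) ℝ) +
          (((1 : MvPolynomial (Fin m) ℝ) - X i ^ 2) * C c) • (H i).map C)
        = ∑ i : Fin m, ((C ε : MvPolynomial (Fin m) ℝ) • (H i).map C +
          (X i : MvPolynomial (Fin m) ℝ) • (H i).map C) := by
      refine Finset.sum_congr rfl fun i _ => ?_
      rw [← add_smul, hscal i, add_smul]
    rw [this, Finset.sum_add_distrib]
    abel

theorem definite_direction_exactness {n m : ℕ}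
    (H₀ : Matrix (Fin n) (Fin n) ℝ) (H : Fin m → Matrix (Fin n) (Fin n) ℝ)
    (h0 : H₀.IsSymm) (hH : ∀ i, (H i).IsSymm)
    (hdef : (∀ i, (H i).PosSemidef) ∨ (∀ i, (-(H i)).PosSemidef)) :
    (∀ δ : Fin m → ℝ, (∀ i, |δ i| ≤ 1) → (H₀ + ∑ i : Fin m, δ i • H i).PosSemidef) ↔
      ∃ (S₀ : Matrix (Fin n) (Fin n) (MvPolynomial (Fin m) ℝ))
        (S : Fin m → Matrix (Fin n) (Fin n) ℝ),
        IsSOSMatrix S₀ ∧ (∀ a b, (S₀ a b).totalDegree ≤ 2) ∧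
        (∀ i, (S i).PosSemidef) ∧
        H₀.map MvPolynomial.C +
            ∑ i : Fin m, (MvPolynomial.X i : MvPolynomial (Fin m) ℝ) • (H i).map MvPolynomial.C =
          S₀ + ∑ i : Fin m,
            ((1 : MvPolynomial (Fin m) ℝ) - MvPolynomial.X i ^ 2) • (S i).map MvPolynomial.C := by
  constructor
  · intro hpos
    rcases hdef with h | h
    · refine forward_aux H₀ H 1 (by norm_num) (fun i => by simpa using h i) ?_
      have h1 : H₀ - ∑ i : Fin m, (1 : ℝ) • H i = H₀ + ∑ i : Fin m, (-1 : ℝ) • H i := by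
        simp [sub_eq_add_neg]
      rw [h1]
      exact hpos (fun _ => -1) (fun i => by norm_num)
    · refine forward_aux H₀ H (-1) (by norm_num) (fun i => by simpa using h i) ?_
      have h1 : H₀ - ∑ i : Fin m, (-1 : ℝ) • H i = H₀ + ∑ i : Fin m, (1 : ℝ) • H i := by
        simp [sub_eq_add_neg]
      rw [h1]
      exact hpos (fun _ => 1) (fun i => by norm_num)
  · rintro ⟨S₀, S, ⟨q, T, rfl⟩, -, hPSD, heq⟩ δ hδ
    have key : H₀ + ∑ i : Fin m, δ i • H i =
        (T.map (eval δ)) * (T.map (eval δ))ᵀ + ∑ i : Fin m, (1 - δ i ^ 2) • S i := by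
      have h1 := congrArg
        (fun M : Matrix (Fin n) (Fin n) (MvPolynomial (Fin m) ℝ) => M.map (eval δ)) heq
      ext a b
      have h2 := congrArg (fun M : Matrix (Fin n) (Fin n) ℝ => M a b) h1
      simp only [Matrix.map_apply, Matrix.add_apply, Matrix.sum_apply, Matrix.smul_apply,
        Matrix.mul_apply, Matrix.transpose_apply, smul_eq_mul, map_add, map_sum, _root_.map_mul,
        map_sub, _root_.map_one, map_pow, eval_C, eval_X] at h2 ⊢
      exact h2
    rw [key]
    refine Matrix.PosSemidef.add ?_ (psd_sum _ _ fun i _ => psd_smul (hPSD i) ?_)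
    · have ht : (T.map (eval δ))ᵀ = (T.map (eval δ))ᴴ :=
        (conjTranspose_eq_transpose_of_trivial _).symm
      rw [ht]
      exact posSemidef_self_mul_conjTranspose _
    · have h3 := abs_le.mp (hδ i)
      nlinarith [h3.1, h3.2]
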